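/- Fix γ > 0 and define P_n(x) = U_n(x) + e^{−γ/2}·U_{n−1}(x) for n ≥ 1 and P_0 = 1, where U_n are Chebyshev polynomials of the second kind. Then P_n has exactly n real zeros, all lying in the open interval (−1, 1). -/

import Mathlib

noncomputable def chebUR : ℕ → ℝ → ℝ
  | 0, _ => 1
  | 1, x => 2 * x
  | (n + 2), x => 2 * x * chebUR (n + 1) x - chebUR n x

noncomputable def Pg (γ : ℝ) : ℕ → ℝ → ℝ
  | 0, _ => 1
  | (n + 1), x => chebUR (n + 1) x + Real.exp (-γ / 2) * chebUR n x

open Polynomial Polynomial.Chebyshev Real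

lemma chebUR_eval (x : ℝ) : ∀ n : ℕ, chebUR n x = (U ℝ (n : ℤ)).eval x := by
  intro n
  induction n using Nat.strong_induction_on with
  | _ n ih =>
    match n with
    | 0 => simp [chebUR, U_zero]
    | 1 => simp [chebUR, U_one]
    | (k + 2) =>
      have h1 := ih (k + 1) (by omega)
      have h0 := ih k (by omega)
      rw [chebUR, h1, h0]
      have hcast : (((k + 2 : ℕ)) : ℤ) = (k : ℤ) + 2 := by push_cast; ring
      rw [hcast, U_add_two]
      have hcast1 : (((k + 1 : ℕ)) : ℤ) = (k : ℤ) + 1 := by push_cast; ring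
      rw [hcast1]
      simp [eval_sub, eval_mul]

lemma chebUR_deg : ∀ k : ℕ, (U ℝ (k : ℤ)).natDegree = k ∧ (U ℝ (k : ℤ)).coeff k = 2 ^ k := by
  intro k
  induction k using Nat.strong_induction_on with
  | _ k ih =>
    match k with
    | 0 => simp [U_zero]
    | 1 =>
      have h2X : (2 * X : ℝ[X]) = C 2 * X := by
        rw [show ((2:ℝ[X])) = C 2 from by rw [map_ofNat]]
      constructor
      · rw [show ((1:ℕ):ℤ) = 1 by norm_num, U_one, h2X,
          natDegree_C_mul (by norm_num), natDegree_X]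
      · rw [show ((1:ℕ):ℤ) = 1 by norm_num, U_one, h2X, coeff_C_mul, coeff_X_one]; norm_num
    | (k + 2) =>
      obtain ⟨hd1, hc1⟩ := ih (k + 1) (by omega)
      obtain ⟨hd0, hc0⟩ := ih k (by omega)
      have hcast : (((k + 2 : ℕ)) : ℤ) = (k : ℤ) + 2 := by push_cast; ring
      have hcast1 : (((k + 1 : ℕ)) : ℤ) = (k : ℤ) + 1 := by push_cast; ring
      rw [hcast, U_add_two, ← hcast1]
      have h2X : (2 * X : ℝ[X]) = C 2 * X := by
        rw [show ((2:ℝ[X])) = C 2 from by rw [map_ofNat]]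
      have hdle : (2 * X * U ℝ ((k + 1 : ℕ) : ℤ) - U ℝ (k : ℤ)).natDegree ≤ k + 2 := by
        apply le_trans (natDegree_sub_le _ _)
        apply max_le
        · apply le_trans natDegree_mul_le
          have hX : (2 * X : ℝ[X]).natDegree = 1 := by
            rw [h2X, natDegree_C_mul (by norm_num), natDegree_X]
          rw [hX, hd1]; omega
        · rw [hd0]; omega
      have hcoeff : (2 * X * U ℝ ((k + 1 : ℕ) : ℤ) - U ℝ (k : ℤ)).coeff (k + 2) = 2 ^ (k + 2) := by
        rw [coeff_sub]
        have hz : (U ℝ (k : ℤ)).coeff (k + 2) = 0 :=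
          coeff_eq_zero_of_natDegree_lt (by rw [hd0]; omega)
        have hre : (2 * X * U ℝ ((k + 1 : ℕ) : ℤ)) = C 2 * (X * U ℝ ((k + 1 : ℕ) : ℤ)) := by
          rw [h2X]; ring
        rw [hre, coeff_C_mul, coeff_X_mul, hc1, hz]
        ring
      exact ⟨natDegree_eq_of_le_of_coeff_ne_zero hdle (by rw [hcoeff]; positivity), hcoeff⟩

lemma chebUR_mono (x : ℝ) (hx : 1 ≤ x) :
    ∀ n : ℕ, chebUR n x ≤ chebUR (n + 1) x ∧ 1 ≤ chebUR n x := by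
  intro n
  induction n with
  | zero =>
    refine ⟨?_, le_refl 1⟩
    show (1 : ℝ) ≤ 2 * x
    linarith
  | succ k ih =>
    obtain ⟨h1, h2⟩ := ih
    have hpos : (1 : ℝ) ≤ chebUR (k + 1) x := le_trans h2 h1
    refine ⟨?_, hpos⟩
    show chebUR (k + 1) x ≤ 2 * x * chebUR (k + 1) x - chebUR k x
    nlinarith

lemma chebUR_parity (x : ℝ) : ∀ n : ℕ, chebUR n (-x) = (-1) ^ n * chebUR n x := by
  intro n
  induction n using Nat.strong_induction_on with
  | _ n ih =>
    match n with
    | 0 => simp [chebUR]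
    | 1 => show 2 * (-x) = (-1) ^ 1 * (2 * x); ring
    | (k + 2) =>
      have h1 := ih (k + 1) (by omega)
      have h0 := ih k (by omega)
      show 2 * (-x) * chebUR (k + 1) (-x) - chebUR k (-x) = _
      rw [h1, h0]
      show _ = (-1) ^ (k + 2) * (2 * x * chebUR (k + 1) x - chebUR k x)
      ring

lemma cos_nat_pi (j : ℕ) : Real.cos (j * π) = (-1) ^ j := by
  have := Real.cos_nat_mul_pi_sub 0 j
  simpa using this

/-- Zeros of `sin ((m+2)θ) + r sin ((m+1)θ)` : `m+1` of them, increasing, in `(0, π)`. -/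
lemma exists_theta (r : ℝ) (hr0 : 0 < r) (hr1 : r < 1) (m : ℕ) :
    ∃ θf : Fin (m + 1) → ℝ, StrictMono θf ∧ (∀ k, θf k ∈ Set.Ioo 0 π) ∧
      (∀ k, Real.sin (((m : ℝ) + 2) * θf k) + r * Real.sin (((m : ℝ) + 1) * θf k) = 0) := by
  set N : ℝ := (m : ℝ) + 2 with hN
  have hNpos : (0 : ℝ) < N := by positivity
  set f : ℝ → ℝ := fun θ => Real.sin (N * θ) + r * Real.sin (((m : ℝ) + 1) * θ) with hf
  set c : ℕ → ℝ := fun j => (2 * j + 1) * π / (2 * N) with hc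
  have hpi := Real.pi_pos
  have hcmono : ∀ j j' : ℕ, j < j' → c j < c j' := by
    intro j j' hjj
    rw [hc]
    apply div_lt_div_of_pos_right ?_ (by positivity)
    have : (2 * (j : ℝ) + 1) < 2 * (j' : ℝ) + 1 := by
      have : (j : ℝ) < j' := by exact_mod_cast hjj
      linarith
    exact mul_lt_mul_of_pos_right this hpi
  have hc0 : ∀ j : ℕ, 0 < c j := by
    intro j
    rw [hc]
    positivity
  have hclt : ∀ j : ℕ, j ≤ m + 1 → c j < π := by
    intro j hj
    rw [hc]
    rw [div_lt_iff₀ (by positivity)]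
    have : (2 * (j : ℝ) + 1) < 2 * N := by
      rw [hN]
      have : (j : ℝ) ≤ (m : ℝ) + 1 := by exact_mod_cast hj
      linarith
    nlinarith
  have hsign : ∀ j : ℕ, j ≤ m + 1 → (-1 : ℝ) ^ j * f (c j) = 1 + r * Real.cos (c j) := by
    intro j hj
    have hNc : N * c j = j * π + π / 2 := by
      rw [hc]
      field_simp
    have hmc : ((m : ℝ) + 1) * c j = (j * π + π / 2) - c j := by
      rw [← hNc, hc, hN]
      ring
    have hsinA : Real.sin ((j : ℝ) * π + π / 2) = (-1) ^ j := by
      rw [Real.sin_add, Real.sin_nat_mul_pi, Real.cos_pi_div_two, Real.sin_pi_div_two, cos_nat_pi]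
      ring
    have hcosA : Real.cos ((j : ℝ) * π + π / 2) = 0 := by
      rw [Real.cos_add, Real.cos_pi_div_two, Real.sin_pi_div_two, Real.sin_nat_mul_pi]
      ring
    have : f (c j) = (-1) ^ j * (1 + r * Real.cos (c j)) := by
      rw [hf]
      simp only
      rw [hNc, hmc, Real.sin_sub, hsinA, hcosA]
      ring
    rw [this, ← mul_assoc, ← pow_add]
    rw [Even.neg_one_pow ⟨j, by ring⟩]
    ring
  have hposval : ∀ j : ℕ, 0 < 1 + r * Real.cos (c j) := by
    intro j
    have h1 : |r * Real.cos (c j)| ≤ r := by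
      rw [abs_mul, abs_of_pos hr0]
      nlinarith [Real.abs_cos_le_one (c j), abs_nonneg (Real.cos (c j))]
    have := abs_le.mp h1
    linarith [this.1]
  have hcont : Continuous f := by
    rw [hf]
    fun_prop
  -- IVT on each interval
  have hIVT : ∀ k : ℕ, k ≤ m → ∃ θ ∈ Set.Ioo (c k) (c (k + 1)), f θ = 0 := by
    intro k hk
    set g : ℝ → ℝ := fun θ => (-1 : ℝ) ^ k * f θ with hg
    have hga : 0 < g (c k) := by
      rw [hg]
      simp only
      rw [hsign k (by omega)]
      exact hposval k
    have hgb : g (c (k + 1)) < 0 := by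
      have h := hsign (k + 1) (by omega)
      have hp := hposval (k + 1)
      have hps : ((-1 : ℝ)) ^ (k + 1) = -((-1 : ℝ) ^ k) := by rw [pow_succ]; ring
      rw [hps, neg_mul] at h
      rw [hg]
      simp only
      linarith
    have hle : c k ≤ c (k + 1) := le_of_lt (hcmono k (k + 1) (by omega))
    have hgcont : ContinuousOn g (Set.Icc (c k) (c (k + 1))) :=
      (continuous_const.mul hcont).continuousOn
    have h0mem : (0 : ℝ) ∈ Set.Ioo (g (c (k + 1))) (g (c k)) := ⟨hgb, hga⟩
    obtain ⟨θ, hθmem, hθval⟩ := intermediate_value_Ioo' hle hgcont h0mem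
    refine ⟨θ, hθmem, ?_⟩
    have hne : ((-1 : ℝ) ^ k) ≠ 0 := by
      apply pow_ne_zero
      norm_num
    rcases mul_eq_zero.mp hθval with h | h
    · exact absurd h hne
    · exact h
  have hchoice : ∀ k : Fin (m + 1), ∃ θ, θ ∈ Set.Ioo (c k) (c (k + 1)) ∧ f θ = 0 := by
    intro k
    obtain ⟨θ, h1, h2⟩ := hIVT k (by omega)
    exact ⟨θ, h1, h2⟩
  choose θf hθmem hθval using hchoice
  refine ⟨θf, ?_, ?_, ?_⟩
  · intro k k' hkk
    have h1 : θf k < c ((k : ℕ) + 1) := (hθmem k).2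
    have h2 : c (k' : ℕ) < θf k' := (hθmem k').1
    have h3 : c ((k : ℕ) + 1) ≤ c (k' : ℕ) := by
      rcases Nat.lt_or_ge ((k : ℕ) + 1) (k' : ℕ) with h | h
      · exact le_of_lt (hcmono _ _ h)
      · have : ((k : ℕ) + 1) = (k' : ℕ) := by
          have : (k : ℕ) < (k' : ℕ) := hkk
          omega
        rw [this]
    linarith
  · intro k
    constructor
    · exact lt_trans (hc0 (k : ℕ)) (hθmem k).1
    · have h1 : θf k < c ((k : ℕ) + 1) := (hθmem k).2
      have h2 : c ((k : ℕ) + 1) < π := hclt _ (by omega)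
      linarith
  · intro k
    have := hθval k
    rw [hf] at this
    simpa [hN] using this

theorem stmt5 (γ : ℝ) (hγ : 0 < γ) (n : ℕ) :
    ∃ S : Finset ℝ, S.card = n ∧ (∀ x ∈ S, x ∈ Set.Ioo (-1 : ℝ) 1) ∧
      (∀ x : ℝ, Pg γ n x = 0 ↔ x ∈ S) := by
  set r : ℝ := Real.exp (-γ / 2) with hr
  have hr0 : 0 < r := Real.exp_pos _
  have hr1 : r < 1 := by
    rw [hr]
    apply Real.exp_lt_one_iff.mpr
    linarith
  match n with
  | 0 =>
    refine ⟨∅, rfl, by simp, fun x => ?_⟩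
    simp [Pg]
  | (m + 1) =>
    set Q : ℝ[X] := U ℝ ((m + 1 : ℕ) : ℤ) + C r * U ℝ (m : ℤ) with hQ
    have hPgQ : ∀ x : ℝ, Pg γ (m + 1) x = Q.eval x := by
      intro x
      show chebUR (m + 1) x + r * chebUR m x = _
      rw [chebUR_eval x (m + 1), chebUR_eval x m, hQ]
      simp
    have hQdeg : Q.natDegree = m + 1 := by
      obtain ⟨hd1, hc1⟩ := chebUR_deg (m + 1)
      obtain ⟨hd0, hc0⟩ := chebUR_deg m
      apply natDegree_eq_of_le_of_coeff_ne_zero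
      · apply le_trans (natDegree_add_le _ _)
        apply max_le (le_of_eq hd1)
        apply le_trans natDegree_mul_le
        simp [hd0]
      · rw [hQ, coeff_add, hc1, coeff_C_mul,
          coeff_eq_zero_of_natDegree_lt (by rw [hd0]; omega)]
        positivity
    have hQne : Q ≠ 0 := by
      intro h
      rw [h] at hQdeg
      simp at hQdeg
    -- no roots outside (-1,1)
    have houtside : ∀ x : ℝ, Pg γ (m + 1) x = 0 → x ∈ Set.Ioo (-1 : ℝ) 1 := by
      intro x hx
      by_contra hmem
      simp only [Set.mem_Ioo, not_and_or, not_lt] at hmem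
      rcases hmem with h | h
      · set y := -x with hy
        have hy1 : 1 ≤ y := by rw [hy]; linarith
        have hxy : x = -y := by rw [hy]; ring
        obtain ⟨hm1, hm2⟩ := chebUR_mono y hy1 m
        have e1 : chebUR (m + 1) x = (-1) ^ (m + 1) * chebUR (m + 1) y := by
          rw [hxy, chebUR_parity]
        have e0 : chebUR m x = (-1) ^ m * chebUR m y := by
          rw [hxy, chebUR_parity]
        have hrw : Pg γ (m + 1) x = (-1) ^ (m + 1) * (chebUR (m + 1) y - r * chebUR m y) := by
          show chebUR (m + 1) x + r * chebUR m x = _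
          rw [e1, e0, pow_succ]
          ring
        rw [hrw] at hx
        have hpos : 0 < chebUR (m + 1) y - r * chebUR m y := by nlinarith
        rcases mul_eq_zero.mp hx with h' | h'
        · exact absurd h' (pow_ne_zero _ (by norm_num))
        · linarith
      · obtain ⟨hm1, hm2⟩ := chebUR_mono x h m
        have hPg : 0 < Pg γ (m + 1) x := by
          show 0 < chebUR (m + 1) x + r * chebUR m x
          nlinarith
        linarith
    -- key evaluation identity
    have hkey : ∀ θ : ℝ, Pg γ (m + 1) (Real.cos θ) * Real.sin θ =
        Real.sin (((m : ℝ) + 2) * θ) + r * Real.sin (((m : ℝ) + 1) * θ) := by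
      intro θ
      have h1 := U_real_cos θ ((m + 1 : ℕ) : ℤ)
      have h0 := U_real_cos θ ((m : ℕ) : ℤ)
      push_cast at h1 h0
      show (chebUR (m + 1) (Real.cos θ) + r * chebUR m (Real.cos θ)) * Real.sin θ = _
      rw [chebUR_eval _ (m + 1), chebUR_eval _ m]
      push_cast
      calc (eval (Real.cos θ) (U ℝ ((m : ℤ) + 1)) + r * eval (Real.cos θ) (U ℝ (m : ℤ)))
            * Real.sin θ
          = eval (Real.cos θ) (U ℝ ((m : ℤ) + 1)) * Real.sin θ
            + r * (eval (Real.cos θ) (U ℝ (m : ℤ)) * Real.sin θ) := by ring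
        _ = _ := by rw [h1, h0]; ring_nf
    -- the roots
    obtain ⟨θf, hθmono, hθIoo, hθzero⟩ := exists_theta r hr0 hr1 m
    have hroot : ∀ k : Fin (m + 1), Pg γ (m + 1) (Real.cos (θf k)) = 0 := by
      intro k
      have hs : 0 < Real.sin (θf k) :=
        Real.sin_pos_of_pos_of_lt_pi (hθIoo k).1 (hθIoo k).2
      have := hkey (θf k)
      rw [hθzero k] at this
      rcases mul_eq_zero.mp this with h | h
      · exact h
      · linarith
    have hinj : Function.Injective (fun k : Fin (m + 1) => Real.cos (θf k)) := by
      have hanti : StrictAnti (fun k : Fin (m + 1) => Real.cos (θf k)) := by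
        intro a b hab
        apply Real.strictAntiOn_cos
        · exact ⟨le_of_lt (hθIoo a).1, le_of_lt (hθIoo a).2⟩
        · exact ⟨le_of_lt (hθIoo b).1, le_of_lt (hθIoo b).2⟩
        · exact hθmono hab
      exact hanti.injective
    set T : Finset ℝ := Finset.image (fun k : Fin (m + 1) => Real.cos (θf k)) Finset.univ with hT
    have hTcard : T.card = m + 1 := by
      rw [hT, Finset.card_image_of_injective _ hinj, Finset.card_univ, Fintype.card_fin]
    set S : Finset ℝ := Q.roots.toFinset with hS
    have hmemS : ∀ x : ℝ, x ∈ S ↔ Q.eval x = 0 := by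
      intro x
      rw [hS, Multiset.mem_toFinset, Polynomial.mem_roots hQne]
      exact ⟨fun h => h, fun h => h⟩
    have hTS : T ⊆ S := by
      intro x hxT
      rw [hT, Finset.mem_image] at hxT
      obtain ⟨k, _, hk⟩ := hxT
      rw [hmemS, ← hk, ← hPgQ]
      exact hroot k
    have hScard_le : S.card ≤ m + 1 := by
      calc S.card ≤ Multiset.card Q.roots := Multiset.toFinset_card_le _
        _ ≤ Q.natDegree := Polynomial.card_roots' Q
        _ = m + 1 := hQdeg
    have hScard : S.card = m + 1 := by
      have := Finset.card_le_card hTS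
      omega
    refine ⟨S, hScard, ?_, ?_⟩
    · intro x hxS
      exact houtside x (by rw [hPgQ]; exact (hmemS x).mp hxS)
    · intro x
      rw [hmemS, hPgQ]
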